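/- Let A be a real m×n matrix, b ∈ ℝ^m, c ∈ ℝⁿ, μ ≥ 0, and suppose the polyhedron {z ∈ ℝⁿ : Az ≤ b} is bounded and contains some point z₀. Let r : ℝⁿ → ℝ be continuous with r(z) ≥ 0 for all z. Then there is a radius R > 0 such that for every λ ≥ 1, every global minimizer z(λ) of F_λ(z) = r(z) + λ·φ(Az − b) − μ·cᵀz satisfies ‖z(λ)‖ ≤ R; i.e. the minimizers are bounded uniformly in the penalty weight λ ≥ 1. -/

import Mathlib

/-- Uniform boundedness of minimizers in the penalty weight: if `{z : Az ≤ b}`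
is bounded and contains a point `z₀`, `μ ≥ 0`, and `r` is continuous and
nonnegative, then there is `R > 0` such that for every `λ ≥ 1`, every global
minimizer of `F_λ(z) = r(z) + λ φ(Az − b) − μ cᵀz` has norm at most `R`. -/
theorem minimizers_uniformly_bounded (m n : ℕ) (A : Matrix (Fin m) (Fin n) ℝ)
    (b : Fin m → ℝ) (c : Fin n → ℝ) (mu : ℝ) (hmu : 0 ≤ mu)
    (hbdd : Bornology.IsBounded
      {z : EuclideanSpace ℝ (Fin n) | ∀ j, A.mulVec z j ≤ b j})
    (z₀ : EuclideanSpace ℝ (Fin n)) (hz₀ : ∀ j, A.mulVec z₀ j ≤ b j)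
    (r : EuclideanSpace ℝ (Fin n) → ℝ) (hr : Continuous r)
    (hr0 : ∀ z, 0 ≤ r z) :
    ∃ R > (0 : ℝ), ∀ lam : ℝ, 1 ≤ lam →
      ∀ zmin : EuclideanSpace ℝ (Fin n),
        (∀ z : EuclideanSpace ℝ (Fin n),
          r zmin + lam * ∑ j, max 0 ((A.mulVec zmin - b) j) ^ 2 -
              mu * ∑ i, c i * zmin i ≤
            r z + lam * ∑ j, max 0 ((A.mulVec z - b) j) ^ 2 -
              mu * ∑ i, c i * z i) →
        ‖zmin‖ ≤ R := by
  classical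
  by_cases hn : n = 0
  · refine ⟨1, one_pos, fun lam _ zmin _ => ?_⟩
    subst hn
    have hz : zmin = 0 := by ext i; exact i.elim0
    simp [hz]
  have hne : Nonempty (Fin n) := ⟨⟨0, Nat.pos_of_ne_zero hn⟩⟩
  haveI : Nontrivial (EuclideanSpace ℝ (Fin n)) := by
    obtain ⟨i0⟩ := hne
    refine ⟨EuclideanSpace.single i0 1, 0, fun h => ?_⟩
    have := congrArg (· i0) h
    simp [EuclideanSpace.single_apply] at this
  set ψ : EuclideanSpace ℝ (Fin n) → ℝ :=
    fun z => ∑ j, max 0 (A.mulVec z j) ^ 2 with hψdef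
  have hψnonneg : ∀ z, 0 ≤ ψ z := fun z =>
    Finset.sum_nonneg fun j _ => by positivity
  have hψcont : Continuous ψ := by
    apply continuous_finset_sum
    intro j _
    have h1 : Continuous fun z : EuclideanSpace ℝ (Fin n) => A.mulVec z j := by
      simp only [Matrix.mulVec, dotProduct]
      exact continuous_finset_sum _ fun i _ =>
        continuous_const.mul (EuclideanSpace.proj i).continuous
    exact (continuous_const.max h1).pow 2
  obtain ⟨d, hd, hdmin⟩ :=
    (isCompact_sphere (0 : EuclideanSpace ℝ (Fin n)) 1).exists_isMinOn
      (NormedSpace.sphere_nonempty.mpr zero_le_one) hψcont.continuousOn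
  replace hdmin : ∀ y ∈ Metric.sphere (0 : EuclideanSpace ℝ (Fin n)) 1, ψ d ≤ ψ y :=
    fun y hy => hdmin hy
  have hd1 : ‖d‖ = 1 := mem_sphere_zero_iff_norm.mp hd
  -- ψ is positive on the sphere
  have hdpos : 0 < ψ d := by
    rcases lt_or_eq_of_le (hψnonneg d) with h | h
    · exact h
    have hAd : ∀ j, A.mulVec d j ≤ 0 := by
      intro j
      have := (Finset.sum_eq_zero_iff_of_nonneg
        (fun j _ => by positivity)).mp h.symm j (Finset.mem_univ j)
      have h2 : max 0 (A.mulVec d j) = 0 := by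
        have := pow_eq_zero_iff (n := 2) (by norm_num) |>.mp this
        exact this
      calc A.mulVec d j ≤ max 0 (A.mulVec d j) := le_max_right _ _
        _ = 0 := h2
    obtain ⟨M, hM⟩ := hbdd.subset_closedBall 0
    set t : ℝ := M + ‖z₀‖ + 1 with ht
    have htpos : 0 ≤ t := by
      have : 0 ≤ M := by
        have := hM hz₀
        have := mem_closedBall_zero_iff.mp this
        have := norm_nonneg z₀
        linarith
      have := norm_nonneg z₀; linarith
    have hmem : z₀ + t • d ∈ {z : EuclideanSpace ℝ (Fin n) | ∀ j, A.mulVec z j ≤ b j} := by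
      intro j
      have : A.mulVec (z₀ + t • d) j = A.mulVec z₀ j + t * A.mulVec d j := by
        rw [Matrix.mulVec_add, Matrix.mulVec_smul]
        simp
      rw [WithLp.ofLp_add, WithLp.ofLp_smul, this]
      have := mul_nonpos_of_nonneg_of_nonpos htpos (hAd j)
      have := hz₀ j
      linarith
    have hle := mem_closedBall_zero_iff.mp (hM hmem)
    have : ‖t • d‖ ≤ ‖z₀ + t • d‖ + ‖z₀‖ := by
      have h3 := norm_add_le (z₀ + t • d) (-z₀)
      simpa using h3
    rw [norm_smul, hd1] at this
    simp only [Real.norm_eq_abs, abs_of_nonneg htpos, mul_one] at this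
    linarith
  -- quadratic lower bound
  have key : ∀ z : EuclideanSpace ℝ (Fin n), ψ d * ‖z‖ ^ 2 ≤ ψ z := by
    intro z
    rcases eq_or_ne z 0 with rfl | hz
    · simp [hψdef]
    have hzn : 0 < ‖z‖ := norm_pos_iff.mpr hz
    have hd' : ‖z‖⁻¹ • z ∈ Metric.sphere (0 : EuclideanSpace ℝ (Fin n)) 1 := by
      simp [norm_smul, abs_of_nonneg (inv_nonneg.mpr hzn.le), inv_mul_cancel₀ hzn.ne']
    have hmin := hdmin _ hd'
    have hscale : ψ (‖z‖⁻¹ • z) = ‖z‖⁻¹ ^ 2 * ψ z := by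
      rw [hψdef]
      simp only []
      rw [Finset.mul_sum]
      refine Finset.sum_congr rfl fun j _ => ?_
      have h1 : A.mulVec (‖z‖⁻¹ • z) j = ‖z‖⁻¹ * A.mulVec z j := by
        simp [Matrix.mulVec, dotProduct, Finset.mul_sum, PiLp.smul_apply,
          smul_eq_mul, mul_left_comm]
      have h2 : (0:ℝ) ⊔ ‖z‖⁻¹ * A.mulVec z j = ‖z‖⁻¹ * (0 ⊔ A.mulVec z j) := by
        rw [mul_max_of_nonneg _ _ (inv_nonneg.mpr hzn.le), mul_zero]
      rw [WithLp.ofLp_smul, h1, h2, mul_pow]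
    rw [hscale] at hmin
    have h2 : ψ d * ‖z‖ ^ 2 ≤ ‖z‖⁻¹ ^ 2 * ψ z * ‖z‖ ^ 2 :=
      mul_le_mul_of_nonneg_right hmin (by positivity)
    calc ψ d * ‖z‖ ^ 2 ≤ ‖z‖⁻¹ ^ 2 * ψ z * ‖z‖ ^ 2 := h2
      _ = ψ z := by field_simp
  -- m is positive
  have hm : (Finset.univ : Finset (Fin m)).Nonempty := by
    by_contra h
    rw [Finset.not_nonempty_iff_eq_empty] at h
    rw [hψdef] at hdpos
    simp only [h, Finset.sum_empty] at hdpos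
    exact lt_irrefl _ hdpos
  obtain ⟨j0, -⟩ := hm
  have hm0 : (0:ℝ) < (m:ℝ) := by exact_mod_cast j0.pos
  set Mc := ‖(WithLp.equiv 2 (Fin n → ℝ)).symm c‖ with hMcdef
  have hMc0 : 0 ≤ Mc := norm_nonneg _
  have hCS : ∀ z : EuclideanSpace ℝ (Fin n), |∑ i, c i * z i| ≤ Mc * ‖z‖ := by
    intro z
    have h1 : ∑ i, c i * z i
        = (inner ℝ ((WithLp.equiv 2 (Fin n → ℝ)).symm c) z : ℝ) := by
      rw [PiLp.inner_apply]
      simp [RCLike.inner_apply, mul_comm]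
    rw [h1]
    exact abs_real_inner_le_norm _ _
  set B := ∑ j, |b j| with hBdef
  have hBj : ∀ j, b j ≤ B := by
    intro j
    rw [hBdef]
    exact le_trans (le_abs_self _)
      (Finset.single_le_sum (f := fun j => |b j|) (fun j _ => abs_nonneg _) (Finset.mem_univ j))
  have hB0 : 0 ≤ B := Finset.sum_nonneg fun j _ => abs_nonneg _
  set C0 := r z₀ + mu * |∑ i, c i * z₀ i| with hC0def
  have hC00 : 0 ≤ C0 := add_nonneg (hr0 _) (mul_nonneg hmu (abs_nonneg _))
  set α := Real.sqrt (ψ d / m) with hαdef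
  have hαpos : 0 < α := Real.sqrt_pos.mpr (div_pos hdpos hm0)
  refine ⟨max 1 ((2*α*B + mu*Mc + C0 + 1)/α^2),
    lt_of_lt_of_le one_pos (le_max_left _ _), ?_⟩
  intro lam hlam zmin hzmin
  by_contra hR
  push_neg at hR
  set s := ‖zmin‖ with hsdef
  have hs1 : 1 < s := lt_of_le_of_lt (le_max_left _ _) hR
  have hs0 : 0 < s := by linarith
  -- upper bound on the penalty at zmin
  have hz₀pen : ∑ j, max 0 ((A.mulVec z₀ - b) j) ^ 2 = 0 := by
    refine Finset.sum_eq_zero fun j _ => ?_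
    have h1 : (A.mulVec z₀ - b) j ≤ 0 := sub_nonpos.mpr (hz₀ j)
    rw [max_eq_left h1]
    norm_num
  set Φ := ∑ j, max 0 ((A.mulVec zmin - b) j) ^ 2 with hΦdef
  have hΦ0 : 0 ≤ Φ := Finset.sum_nonneg fun j _ => by positivity
  have hub : Φ ≤ C0 + mu * Mc * s := by
    have h1 := hzmin z₀
    rw [hz₀pen, mul_zero] at h1
    have h2 : Φ ≤ lam * Φ := le_mul_of_one_le_left hΦ0 hlam
    have h3 : mu * ∑ i, c i * zmin i ≤ mu * Mc * s := by
      rw [mul_assoc]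
      exact mul_le_mul_of_nonneg_left (le_trans (le_abs_self _) (hCS zmin)) hmu
    have h4 : -(mu * ∑ i, c i * z₀ i) ≤ mu * |∑ i, c i * z₀ i| := by
      rw [← mul_neg]
      exact mul_le_mul_of_nonneg_left (neg_le_abs _) hmu
    have h5 := hr0 zmin
    linarith [hC0def.le, hC0def.ge]
  -- lower bound : some coordinate of A zmin is large
  have hkey : ψ d * s ^ 2 ≤ ∑ j, max 0 (A.mulVec zmin j) ^ 2 := by
    have := key zmin
    rw [hψdef] at this
    exact this
  have hsum : ∑ _j : Fin m, ψ d * s ^ 2 / m ≤ ∑ j, max 0 (A.mulVec zmin j) ^ 2 := by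
    rw [Finset.sum_const, Finset.card_univ, Fintype.card_fin, nsmul_eq_mul]
    have h1 : (m:ℝ) * (ψ d * s ^ 2 / m) = ψ d * s ^ 2 := by field_simp
    rw [h1]
    exact hkey
  obtain ⟨j, -, hj⟩ := Finset.exists_le_of_sum_le ⟨j0, Finset.mem_univ j0⟩ hsum
  have hαs : α * s ≤ max 0 (A.mulVec zmin j) := by
    have e1 : (α * s) ^ 2 = ψ d * s ^ 2 / m := by
      rw [mul_pow, hαdef, Real.sq_sqrt (le_of_lt (div_pos hdpos hm0))]
      ring
    calc α * s = Real.sqrt ((α * s) ^ 2) := (Real.sqrt_sq (by positivity)).symm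
      _ ≤ Real.sqrt ((max 0 (A.mulVec zmin j)) ^ 2) :=
          Real.sqrt_le_sqrt (by rw [e1]; exact hj)
      _ = max 0 (A.mulVec zmin j) := Real.sqrt_sq (le_max_left _ _)
  have hAz : α * s ≤ A.mulVec zmin j := by
    rcases le_max_iff.mp hαs with h | h
    · nlinarith [mul_pos hαpos hs0]
    · exact h
  have h6' : (2*α*B + mu*Mc + C0 + 1)/α^2 < s := lt_of_le_of_lt (le_max_right _ _) hR
  have h6 : 2*α*B + mu*Mc + C0 + 1 < α^2 * s := by
    have hα2 : (0:ℝ) < α ^ 2 := pow_pos hαpos 2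
    rw [div_lt_iff₀ hα2] at h6'
    linarith
  have hge : B ≤ α * s := by
    by_contra hlt
    push_neg at hlt
    have h7 : α * (α * s) ≤ α * B := mul_le_mul_of_nonneg_left hlt.le hαpos.le
    have h8 : 0 ≤ α * B := mul_nonneg hαpos.le hB0
    have h9 : 0 ≤ mu * Mc := mul_nonneg hmu hMc0
    have heq : α ^ 2 * s = α * (α * s) := by ring
    linarith only [h6, h7, h8, h9, heq, hC00]
  have hterm : (α * s - B) ^ 2 ≤ Φ := by
    have h1 : α * s - B ≤ max 0 ((A.mulVec zmin - b) j) := by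
      have h2 : α * s - B ≤ (A.mulVec zmin - b) j := by
        have h3 := hBj j
        have h4 : (A.mulVec zmin - b) j = A.mulVec zmin j - b j := rfl
        rw [h4]
        linarith
      exact le_trans h2 (le_max_right _ _)
    calc (α * s - B) ^ 2 ≤ (max 0 ((A.mulVec zmin - b) j)) ^ 2 :=
          pow_le_pow_left₀ (by linarith) h1 2
      _ ≤ Φ := by
          rw [hΦdef]
          exact Finset.single_le_sum (f := fun j => (0 ⊔ (A.mulVec zmin - b) j) ^ 2)
            (fun j _ => by positivity) (Finset.mem_univ j)
  have h6s := mul_lt_mul_of_pos_right h6 hs0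
  have hC0s : C0 ≤ C0 * s := le_mul_of_one_le_right hC00 hs1.le
  linarith only [hterm, hub, h6s, hC0s, hs0, sq_nonneg B]
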